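/- A subset A of ω^ω is almost Baire if and only if either there is some t ∈ ω^{<ω} such that A is comeager in N_t, or ω^ω ∖ A is comeager. -/

import Mathlib

universe u

noncomputable section

/-! ## Sequences of ordinals

`SeqLT o v` is the set `v^{<o}` of all sequences of ordinals `< v` of length `< o`
(for `o > 0`; values beyond the length are normalized to `0`).
`SeqFull o v` is the generalized Baire space `v^o` of all functions from ordinals `< o`
to ordinals `< v`. -/

/-- An element of `v^{<o}`: a sequence of ordinals `< v` of length `< o`. -/
structure SeqLT (o v : Ordinal.{u}) : Type (u + 1) where
  len : Ordinal.{u}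
  len_lt : len < o ⊔ 1
  val : Ordinal.{u} → Ordinal.{u}
  val_lt : ∀ β, β < len → val β < v
  val_zero : ∀ β, len ≤ β → val β = 0

namespace SeqLT

variable {o v : Ordinal.{u}}

/-- `s ⊆ t`, i.e. `t` end-extends `s`. -/
protected def le (s t : SeqLT o v) : Prop :=
  s.len ≤ t.len ∧ ∀ β, β < s.len → s.val β = t.val β

/-- `s ⊊ t`, i.e. `t` properly end-extends `s`. -/
protected def slt (s t : SeqLT o v) : Prop :=
  s.le t ∧ s.len < t.len

/-- The empty sequence. -/
protected def empty (o v : Ordinal.{u}) : SeqLT o v where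
  len := 0
  len_lt := lt_sup_iff.mpr (Or.inr zero_lt_one)
  val := fun _ => 0
  val_lt := fun β h => absurd h (show ¬ β < 0 from not_lt_of_ge zero_le)
  val_zero := fun _ _ => rfl

/-- `s⌢⟨β⟩`: the sequence `s` extended by the single value `β`. -/
def snoc (s : SeqLT o v) (β : Ordinal.{u}) : SeqLT o v :=
  if h : s.len + 1 < o ⊔ 1 ∧ β < v then
    { len := s.len + 1
      len_lt := h.1
      val := fun γ => if γ = s.len then β else s.val γ
      val_lt := fun γ hγ => by
        rcases eq_or_ne γ s.len with rfl | hne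
        · simpa using h.2
        · simp only [if_neg hne]
          refine s.val_lt γ (lt_of_le_of_ne ?_ hne)
          rw [Ordinal.add_one_eq_succ] at hγ
          exact Order.lt_succ_iff.mp hγ
      val_zero := fun γ hγ => by
        have h1 : s.len < γ :=
          lt_of_lt_of_le (by rw [Ordinal.add_one_eq_succ]; exact Order.lt_succ s.len) hγ
        simp only [if_neg h1.ne']
        exact s.val_zero γ h1.le }
  else s

protected theorem le_refl (s : SeqLT o v) : s.le s :=
  ⟨le_rfl, fun _ _ => rfl⟩

protected theorem le_trans {s t u : SeqLT o v} (h1 : s.le t) (h2 : t.le u) : s.le u :=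
  ⟨h1.1.trans h2.1, fun β hβ => (h1.2 β hβ).trans (h2.2 β (lt_of_lt_of_le hβ h1.1))⟩

end SeqLT

/-- An element of the generalized Baire space `v^o`. -/
structure SeqFull (o v : Ordinal.{u}) : Type (u + 1) where
  val : Ordinal.{u} → Ordinal.{u}
  val_lt : ∀ β, β < o → val β < v
  val_zero : ∀ β, o ≤ β → val β = 0

/-- The restriction `x ↾ β` of `x : v^o` to an ordinal `β < o`. -/
def SeqFull.res {o v : Ordinal.{u}} (x : SeqFull o v) (β : Ordinal.{u}) : SeqLT o v :=
  if h : β < o ⊔ 1 then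
    { len := β
      len_lt := h
      val := fun γ => if γ < β then x.val γ else 0
      val_lt := fun γ hγ => by
        simp only [if_pos hγ]
        rcases lt_sup_iff.mp h with h' | h'
        · exact x.val_lt γ (hγ.trans h')
        · rw [Ordinal.lt_one_iff_zero] at h'
          exact absurd (h' ▸ hγ) (show ¬ γ < 0 from not_lt_of_ge zero_le)
      val_zero := fun γ hγ => if_neg (not_lt.mpr hγ) }
  else SeqLT.empty o v

/-- `s ⊆ x`: the sequence `s` is an initial segment of `x : v^o`. -/
def SeqLT.prefixOf {o v : Ordinal.{u}} (s : SeqLT o v) (x : SeqFull o v) : Prop :=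
  ∀ β, β < s.len → s.val β = x.val β

/-! ## The bounded topology -/

/-- The basic open set `N_t`. -/
def basicOpen {o v : Ordinal.{u}} (t : SeqLT o v) : Set (SeqFull o v) :=
  {x | t.prefixOf x}

/-- The bounded (standard) topology on the generalized Baire space, generated by the
basic open sets `N_t`. -/
instance (o v : Ordinal.{u}) : TopologicalSpace (SeqFull o v) :=
  TopologicalSpace.generateFrom {U | ∃ t : SeqLT o v, U = basicOpen t}

/-- `A` is a nowhere dense subset of `B` (in the subspace topology on `B`). -/
def NowhereDenseIn {o v : Ordinal.{u}} (A B : Set (SeqFull o v)) : Prop :=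
  A ⊆ B ∧ interior (closure {x : ↥B | (x : SeqFull o v) ∈ A}) = ∅

/-- `A` is `o`-meager in `B`: `A ∩ B` is the union of (card of) `o` many nowhere dense
subsets of `B`. -/
def MeagerIn {o v : Ordinal.{u}} (A B : Set (SeqFull o v)) : Prop :=
  ∃ F : {β : Ordinal.{u} // β < o} → Set (SeqFull o v),
    (∀ i, NowhereDenseIn (F i) B) ∧ A ∩ B = ⋃ i, F i

/-- `A` is comeager in `B`: `B \ A` is meager in `B`. -/
def ComeagerIn {o v : Ordinal.{u}} (A B : Set (SeqFull o v)) : Prop :=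
  MeagerIn (B \ A) B

/-- `A` has the `o`-Baire property: for some open `U`, `A △ U` is meager. -/
def BaireSet {o v : Ordinal.{u}} (A : Set (SeqFull o v)) : Prop :=
  ∃ U : Set (SeqFull o v), IsOpen U ∧ MeagerIn (symmDiff A U) Set.univ

/-! ## Homomorphisms of `v^{<o}` -/

/-- A homomorphism: strictly extension-preserving map of `v^{<o}` to itself. -/
def IsHom {o v : Ordinal.{u}} (f : SeqLT o v → SeqLT o v) : Prop :=
  ∀ s t : SeqLT o v, s.slt t → (f s).slt (f t)

/-- `f` is dense: for every `s` and every `t ⊇ f(s)` there is `β < v` with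
`f(s⌢⟨β⟩) ⊇ t`. -/
def IsDenseMap {o v : Ordinal.{u}} (f : SeqLT o v → SeqLT o v) : Prop :=
  ∀ s t : SeqLT o v, (f s).le t → ∃ β, β < v ∧ t.le (f (s.snoc β))

/-- `u = ⋃_{α<γ} s α` for a chain `s`. -/
def IsUnionOfChain {o v : Ordinal.{u}} (u : SeqLT o v) (γ : Ordinal.{u})
    (s : Ordinal.{u} → SeqLT o v) : Prop :=
  (∀ α, α < γ → (s α).le u) ∧ ∀ β, β < u.len → ∃ α, α < γ ∧ β < (s α).len

/-- `f` is continuous: for every limit `γ < o` and every strictly increasing sequence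
`⟨s_α : α < γ⟩`, `f(⋃_{α<γ} s_α) = ⋃_{α<γ} f(s_α)`. -/
def IsContinuousMap {o v : Ordinal.{u}} (f : SeqLT o v → SeqLT o v) : Prop :=
  ∀ γ : Ordinal.{u}, Order.IsSuccLimit γ → γ < o →
    ∀ s : Ordinal.{u} → SeqLT o v, (∀ α β, α < β → β < γ → (s α).slt (s β)) →
      ∀ u : SeqLT o v, IsUnionOfChain u γ s → IsUnionOfChain (f u) γ fun α => f (s α)

/-- `y = f*(x) = ⋃_{α<o} f(x↾α)` for a homomorphism `f`. -/
def FStarVal {o v : Ordinal.{u}} (f : SeqLT o v → SeqLT o v) (x y : SeqFull o v) : Prop :=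
  (∀ α, α < o → (f (x.res α)).prefixOf y) ∧
    ∀ β, β < o → ∃ α, α < o ∧ β < (f (x.res α)).len

/-! ## Clubs and the almost Baire property -/

/-- `C` is a club (closed unbounded set) in the ordinal `o`. -/
def IsClubIn (C : Set Ordinal.{u}) (o : Ordinal.{u}) : Prop :=
  (∀ γ ∈ C, γ < o) ∧ (∀ β, β < o → ∃ γ ∈ C, β ≤ γ) ∧
    ∀ β, β < o → 0 < β → (∀ γ, γ < β → ∃ ξ ∈ C, γ < ξ ∧ ξ < β) → β ∈ C

/-- The set of functions coding elements of the club filter as characteristic functions. -/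
def ClSet (o v : Ordinal.{u}) : Set (SeqFull o v) :=
  {x | ∃ C : Set Ordinal.{u}, IsClubIn C o ∧ ∀ i ∈ C, x.val i ≠ 0}

/-- The set of functions coding elements of the nonstationary ideal. -/
def NsSet (o v : Ordinal.{u}) : Set (SeqFull o v) :=
  {x | ∃ C : Set Ordinal.{u}, IsClubIn C o ∧ ∀ i ∈ C, x.val i = 0}

/-- `A` is almost Baire: there is a dense homomorphism `f` with `ran f* ⊆ A`, or a dense
continuous homomorphism `f` with `f ∅ = ∅` and `ran f* ⊆ Aᶜ`. -/
def AlmostBaire {o v : Ordinal.{u}} (A : Set (SeqFull o v)) : Prop :=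
  ∃ f : SeqLT o v → SeqLT o v, IsHom f ∧ IsDenseMap f ∧
    ((∀ x y, FStarVal f x y → y ∈ A) ∨
      ((∀ x y, FStarVal f x y → y ∉ A) ∧ IsContinuousMap f ∧
        f (SeqLT.empty o v) = SeqLT.empty o v))

/-! ## Banach–Mazur games of length `o`

A run of the game is a strictly increasing sequence `⟨s_α : α < o⟩` in `v^{<o}`;
player I plays at even positions (`0` and limits count as even), player II at odd ones.
In the game `G^t` the first move of player I must extend `t`; taking `t = ∅` gives the
plain Banach–Mazur game. -/

/-- `γ` is an even ordinal (`0` and limits are even). -/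
def EvenOrd (γ : Ordinal.{u}) : Prop := ∃ δ : Ordinal.{u}, γ = 2 * δ

/-- `γ` is an odd ordinal. -/
def OddOrd (γ : Ordinal.{u}) : Prop := ∃ δ : Ordinal.{u}, γ = 2 * δ + 1

/-- The moves of a (partial) run, as a function on ordinals. -/
abbrev Play (o v : Ordinal.{u}) := Ordinal.{u} → SeqLT o v

/-- A strategy: given the length of the current position and the moves so far,
produce the next move. -/
abbrev Strat (o v : Ordinal.{u}) := Ordinal.{u} → Play o v → SeqLT o v

/-- `p` is a legal partial run of length `γ` of the game `G^t`: strictly increasing moves,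
the first move extends `t`, and the moves beyond `γ` are normalized to `∅`. -/
def IsPos {o v : Ordinal.{u}} (t : SeqLT o v) (p : Play o v) (γ : Ordinal.{u}) : Prop :=
  (∀ α β, α < β → β < γ → (p α).slt (p β)) ∧ (0 < γ → t.le (p 0)) ∧
    ∀ α, γ ≤ α → p α = SeqLT.empty o v

/-- The restriction of a run to its first `γ` moves. -/
def resPlay {o v : Ordinal.{u}} (p : Play o v) (γ : Ordinal.{u}) : Play o v :=
  fun α => if α < γ then p α else SeqLT.empty o v

/-- `m` is a legal move at the position `p` of length `γ` in the game `G^t`. -/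
def MoveOK {o v : Ordinal.{u}} (t : SeqLT o v) (p : Play o v) (γ : Ordinal.{u})
    (m : SeqLT o v) : Prop :=
  (∀ α, α < γ → (p α).slt m) ∧ (γ = 0 → t.le m)

/-- `σ` is a strategy for player I in `G^t`: it assigns a legal move to every legal
position of even length. -/
def LegalI {o v : Ordinal.{u}} (t : SeqLT o v) (σ : Strat o v) : Prop :=
  ∀ γ, γ < o → EvenOrd γ → ∀ p, IsPos t p γ → MoveOK t p γ (σ γ p)

/-- `σ` is a strategy for player II in `G^t`: it assigns a legal move to every legal
position of odd length. -/
def LegalII {o v : Ordinal.{u}} (t : SeqLT o v) (σ : Strat o v) : Prop :=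
  ∀ γ, γ < o → OddOrd γ → ∀ p, IsPos t p γ → MoveOK t p γ (σ γ p)

/-- The first `γ` moves of `p` follow the strategy `σ` of player I. -/
def FollowsI {o v : Ordinal.{u}} (σ : Strat o v) (p : Play o v) (γ : Ordinal.{u}) : Prop :=
  ∀ α, α < γ → EvenOrd α → p α = σ α (resPlay p α)

/-- The first `γ` moves of `p` follow the strategy `σ` of player II. -/
def FollowsII {o v : Ordinal.{u}} (σ : Strat o v) (p : Play o v) (γ : Ordinal.{u}) : Prop :=
  ∀ α, α < γ → OddOrd α → p α = σ α (resPlay p α)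

/-- `x = ⋃_{α<o} p α` is the outcome of the complete run `p`. -/
def IsOutcome {o v : Ordinal.{u}} (p : Play o v) (x : SeqFull o v) : Prop :=
  (∀ α, α < o → (p α).prefixOf x) ∧ ∀ β, β < o → ∃ α, α < o ∧ β < (p α).len

/-- Player I has a winning strategy in the Banach–Mazur game `G^t(A)` of length `o`. -/
def WinIStrat {o v : Ordinal.{u}} (t : SeqLT o v) (A : Set (SeqFull o v)) : Prop :=
  ∃ σ : Strat o v, LegalI t σ ∧
    ∀ p : Play o v, IsPos t p o → FollowsI σ p o → ∃ x, IsOutcome p x ∧ x ∈ A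

/-- Player II has a winning strategy in the Banach–Mazur game `G^t(A)` of length `o`. -/
def WinIIStrat {o v : Ordinal.{u}} (t : SeqLT o v) (A : Set (SeqFull o v)) : Prop :=
  ∃ σ : Strat o v, LegalII t σ ∧
    ∀ p : Play o v, IsPos t p o → FollowsII σ p o → ∃ x, IsOutcome p x ∧ x ∉ A

/-- `σ` is a tactic for player II: its moves depend only on the union of the previous moves. -/
def IsTacticII {o v : Ordinal.{u}} (t : SeqLT o v) (σ : Strat o v) : Prop :=
  ∃ f : SeqLT o v → SeqLT o v, ∀ γ, γ < o → OddOrd γ → ∀ p, IsPos t p γ →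
    ∀ u, IsUnionOfChain u γ p → σ γ p = f u

/-- Player II has a winning tactic in the Banach–Mazur game `G^t(A)` of length `o`. -/
def WinIITactic {o v : Ordinal.{u}} (t : SeqLT o v) (A : Set (SeqFull o v)) : Prop :=
  ∃ σ : Strat o v, LegalII t σ ∧ IsTacticII t σ ∧
    ∀ p : Play o v, IsPos t p o → FollowsII σ p o → ∃ x, IsOutcome p x ∧ x ∉ A

/-! ## Trees and perfect sets -/

/-- A subtree of `v^{<o}`: a downwards closed set of sequences. -/
def IsSubtree {o v : Ordinal.{u}} (T : Set (SeqLT o v)) : Prop :=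
  ∀ s ∈ T, ∀ r : SeqLT o v, r.le s → r ∈ T

/-- `T` is closed: every strictly increasing sequence in `T` of length `< o` has an
upper bound in `T`. -/
def TreeClosed {o v : Ordinal.{u}} (T : Set (SeqLT o v)) : Prop :=
  ∀ γ : Ordinal.{u}, γ < o → ∀ s : Ordinal.{u} → SeqLT o v,
    (∀ α β, α < β → β < γ → (s α).slt (s β)) → (∀ α, α < γ → s α ∈ T) →
      ∃ b ∈ T, ∀ α, α < γ → (s α).le b

/-- `t` is a direct successor of `s`. -/
def IsDirectSucc {o v : Ordinal.{u}} (s t : SeqLT o v) : Prop :=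
  s.slt t ∧ t.len = s.len + 1

/-- `T` is a perfect tree: a (nonempty) closed subtree whose splitting nodes are cofinal. -/
def IsPerfectTree {o v : Ordinal.{u}} (T : Set (SeqLT o v)) : Prop :=
  T.Nonempty ∧ IsSubtree T ∧ TreeClosed T ∧
    ∀ s ∈ T, ∃ t ∈ T, s.le t ∧
      ∃ t₁ ∈ T, ∃ t₂ ∈ T, IsDirectSucc t t₁ ∧ IsDirectSucc t t₂ ∧ t₁ ≠ t₂

/-- The body `[T]` of a tree `T`: the set of branches of length `o` through `T`. -/
def treeBody {o v : Ordinal.{u}} (T : Set (SeqLT o v)) : Set (SeqFull o v) :=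
  {x | ∀ α, α < o → x.res α ∈ T}

/-! ## Auxiliary development for `statement9` -/

namespace Statement9Aux

open Ordinal

abbrev ω₀ : Ordinal.{u} := Ordinal.omega0

abbrev Q : Type (u + 1) := SeqLT ω₀ ω₀
abbrev X : Type (u + 1) := SeqFull ω₀ ω₀

theorem omega_sup_one : ω₀ ⊔ 1 = ω₀ := sup_eq_left.mpr one_lt_omega0.le

theorem len_lt (s : Q) : s.len < ω₀ := by
  have := s.len_lt; rwa [omega_sup_one] at this

theorem lt_sup_of_lt {α : Ordinal} (h : α < ω₀) : α < ω₀ ⊔ 1 :=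
  lt_of_lt_of_le h le_sup_left

noncomputable def o2n {β : Ordinal} (h : β < ω₀) : ℕ := (lt_omega0.mp h).choose

theorem o2n_spec {β : Ordinal} (h : β < ω₀) : ((o2n h : ℕ) : Ordinal) = β :=
  ((lt_omega0.mp h).choose_spec).symm

theorem o2n_cast (n : ℕ) (h : ((n : ℕ) : Ordinal) < ω₀) : o2n h = n :=
  Nat.cast_inj.mp (o2n_spec h)

theorem add_one_lt_omega {a : Ordinal} (h : a < ω₀) : a + 1 < ω₀ := by
  obtain ⟨n, rfl⟩ := lt_omega0.mp h
  rw [← Nat.cast_succ]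
  exact nat_lt_omega0 _

theorem seq_ext {o v : Ordinal} {s t : SeqLT o v} (h1 : s.len = t.len)
    (h2 : ∀ β, β < s.len → s.val β = t.val β) : s = t := by
  obtain ⟨l1, hl1, v1, p1, z1⟩ := s
  obtain ⟨l2, hl2, v2, p2, z2⟩ := t
  dsimp only at h1 h2
  subst h1
  have hv : v1 = v2 := by
    funext β
    rcases lt_or_ge β l1 with h | h
    · exact h2 β h
    · rw [z1 β h, z2 β h]
  subst hv
  rfl

theorem prefix_mono {s t : Q} {x : X} (h : s.le t) (ht : t.prefixOf x) : s.prefixOf x :=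
  fun β hβ => (h.2 β hβ).trans (ht β (lt_of_lt_of_le hβ h.1))

theorem basicOpen_mono {s t : Q} (h : s.le t) : basicOpen t ⊆ basicOpen s :=
  fun _ hx => prefix_mono h hx

theorem res_len {x : X} {α : Ordinal} (h : α < ω₀) : (x.res α).len = α := by
  simp only [SeqFull.res, dif_pos (lt_sup_of_lt h)]

theorem res_val {x : X} {α γ : Ordinal} (h : α < ω₀) (hγ : γ < α) :
    (x.res α).val γ = x.val γ := by
  simp only [SeqFull.res, dif_pos (lt_sup_of_lt h)]
  exact if_pos hγ

theorem res_prefix (x : X) {α : Ordinal} (h : α < ω₀) : (x.res α).prefixOf x := by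
  intro β hβ
  rw [res_len h] at hβ
  exact res_val h hβ

theorem mem_res (x : X) {α : Ordinal} (h : α < ω₀) : x ∈ basicOpen (x.res α) :=
  res_prefix x h

theorem res_le_res (x : X) {α β : Ordinal} (hαβ : α ≤ β) (hβ : β < ω₀) :
    (x.res α).le (x.res β) := by
  have hα : α < ω₀ := lt_of_le_of_lt hαβ hβ
  refine ⟨by rw [res_len hα, res_len hβ]; exact hαβ, fun γ hγ => ?_⟩
  rw [res_len hα] at hγ
  rw [res_val hα hγ, res_val hβ (lt_of_lt_of_le hγ hαβ)]

theorem le_of_prefix {s : Q} {x : X} (hs : s.prefixOf x) {α : Ordinal}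
    (hsα : s.len ≤ α) (hα : α < ω₀) : s.le (x.res α) := by
  refine ⟨by rw [res_len hα]; exact hsα, fun β hβ => ?_⟩
  rw [res_val hα (lt_of_lt_of_le hβ hsα)]
  exact hs β hβ

noncomputable def pt (t : Q) : X where
  val := t.val
  val_lt := fun β _ => by
    rcases lt_or_ge β t.len with h | h
    · exact t.val_lt β h
    · rw [t.val_zero β h]; exact omega0_pos
  val_zero := fun β h => t.val_zero β (le_trans (len_lt t).le h)

theorem pt_mem (t : Q) : pt t ∈ basicOpen t := fun _ _ => rfl

theorem compat {s t : Q} {x : X} (hs : x ∈ basicOpen s) (ht : x ∈ basicOpen t) :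
    s.le t ∨ t.le s := by
  rcases le_total s.len t.len with h | h
  · exact Or.inl ⟨h, fun β hβ => (hs β hβ).trans (ht β (lt_of_lt_of_le hβ h)).symm⟩
  · exact Or.inr ⟨h, fun β hβ => (ht β hβ).trans (hs β (lt_of_lt_of_le hβ h)).symm⟩

theorem basicOpen_isOpen (t : Q) : IsOpen (basicOpen t) :=
  TopologicalSpace.GenerateOpen.basic _ ⟨t, rfl⟩

theorem isOpen_iff {U : Set X} :
    IsOpen U ↔ ∀ x ∈ U, ∃ α, α < ω₀ ∧ basicOpen (x.res α) ⊆ U := by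
  constructor
  · intro h
    have h' : TopologicalSpace.GenerateOpen {V : Set X | ∃ t : Q, V = basicOpen t} U := h
    clear h
    induction h' with
    | basic V hV =>
      obtain ⟨t, rfl⟩ := hV
      intro x hx
      exact ⟨t.len, len_lt t, basicOpen_mono (le_of_prefix hx le_rfl (len_lt t))⟩
    | univ => exact fun x _ => ⟨0, omega0_pos, fun _ _ => trivial⟩
    | inter U V _ _ ihU ihV =>
      intro x hx
      obtain ⟨α, hα, hU⟩ := ihU x hx.1
      obtain ⟨β, hβ, hV⟩ := ihV x hx.2
      have hm : α ⊔ β < ω₀ := sup_lt_iff.mpr ⟨hα, hβ⟩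
      refine ⟨α ⊔ β, hm, fun y hy => ?_⟩
      exact ⟨hU (basicOpen_mono (res_le_res x le_sup_left hm) hy),
        hV (basicOpen_mono (res_le_res x le_sup_right hm) hy)⟩
    | sUnion S _ ih =>
      intro x hx
      obtain ⟨V, hVS, hxV⟩ := hx
      obtain ⟨α, hα, hsub⟩ := ih V hVS x hxV
      exact ⟨α, hα, fun y hy => ⟨V, hVS, hsub hy⟩⟩
  · intro h
    have hU : U = ⋃₀ {V | (∃ t : Q, V = basicOpen t) ∧ V ⊆ U} := by
      ext x
      constructor
      · intro hx
        obtain ⟨α, hα, hsub⟩ := h x hx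
        exact ⟨basicOpen (x.res α), ⟨⟨_, rfl⟩, hsub⟩, mem_res x hα⟩
      · rintro ⟨V, ⟨_, hVU⟩, hxV⟩
        exact hVU hxV
    rw [hU]
    exact isOpen_sUnion fun V hV => by
      obtain ⟨⟨t, rfl⟩, -⟩ := hV
      exact basicOpen_isOpen t

theorem image_val (B S : Set X) (hSB : S ⊆ B) :
    (Subtype.val '' {x : ↥B | (x : X) ∈ S}) = S := by
  ext y
  constructor
  · rintro ⟨x, hx, rfl⟩; exact hx
  · intro hy; exact ⟨⟨y, hSB hy⟩, hy, rfl⟩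

theorem nd_char {B S : Set X} (hB : IsOpen B) (hSB : S ⊆ B) :
    NowhereDenseIn S B ↔
      ∀ r : Q, basicOpen r ⊆ B → ∃ r' : Q, r.le r' ∧ basicOpen r' ∩ S = ∅ := by
  constructor
  · rintro ⟨-, hint⟩ r hr
    have hne : (Subtype.val ⁻¹' basicOpen r : Set ↥B).Nonempty :=
      ⟨⟨pt r, hr (pt_mem r)⟩, pt_mem r⟩
    have hop : IsOpen (Subtype.val ⁻¹' basicOpen r : Set ↥B) :=
      (basicOpen_isOpen r).preimage continuous_subtype_val
    have hnotsub : ¬(Subtype.val ⁻¹' basicOpen r : Set ↥B) ⊆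
        closure {x : ↥B | (x : X) ∈ S} := by
      intro hsub
      have h2 := hop.subset_interior_iff.mpr hsub
      rw [hint] at h2
      exact hne.ne_empty (Set.subset_empty_iff.mp h2)
    obtain ⟨w, hw1, hw2⟩ := Set.not_subset.mp hnotsub
    rw [closure_subtype, image_val B S hSB, mem_closure_iff] at hw2
    push_neg at hw2
    obtain ⟨V, hV, hwV, hVS⟩ := hw2
    obtain ⟨α, hα, hsub⟩ := isOpen_iff.mp hV (w : X) hwV
    have hmax : α ⊔ r.len < ω₀ := sup_lt_iff.mpr ⟨hα, len_lt r⟩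
    refine ⟨(w : X).res (α ⊔ r.len), le_of_prefix hw1 le_sup_right hmax, ?_⟩
    have h1 : basicOpen ((w : X).res (α ⊔ r.len)) ⊆ V :=
      (basicOpen_mono (res_le_res _ le_sup_left hmax)).trans hsub
    apply Set.subset_empty_iff.mp
    rw [← hVS]
    exact Set.inter_subset_inter_left S h1
  · intro h
    refine ⟨hSB, ?_⟩
    by_contra hne
    obtain ⟨z, hz⟩ := Set.nonempty_iff_ne_empty.mpr hne
    obtain ⟨U, hU, hUeq⟩ :=
      isOpen_induced_iff.mp (isOpen_interior
        (s := closure {x : ↥B | (x : X) ∈ S}))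
    have hzU : (z : X) ∈ U := by
      rw [← hUeq] at hz; exact hz
    obtain ⟨α, hα, hsub⟩ := isOpen_iff.mp hU (z : X) hzU
    obtain ⟨α₂, hα₂, hsub₂⟩ := isOpen_iff.mp hB (z : X) z.2
    have hmax : α ⊔ α₂ < ω₀ := sup_lt_iff.mpr ⟨hα, hα₂⟩
    have hrB : basicOpen ((z : X).res (α ⊔ α₂)) ⊆ B :=
      (basicOpen_mono (res_le_res _ le_sup_right hmax)).trans hsub₂
    have hrU : basicOpen ((z : X).res (α ⊔ α₂)) ⊆ U :=
      (basicOpen_mono (res_le_res _ le_sup_left hmax)).trans hsub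
    obtain ⟨r', hrr', hr'S⟩ := h _ hrB
    have hy : pt r' ∈ basicOpen ((z : X).res (α ⊔ α₂)) :=
      basicOpen_mono hrr' (pt_mem r')
    have hyB : pt r' ∈ B := hrB hy
    have hcl : (⟨pt r', hyB⟩ : ↥B) ∈ closure {x : ↥B | (x : X) ∈ S} := by
      apply interior_subset
      rw [← hUeq]
      exact hrU hy
    rw [closure_subtype, image_val B S hSB, mem_closure_iff] at hcl
    obtain ⟨w, hw⟩ := hcl _ (basicOpen_isOpen r') (pt_mem r')
    rw [hr'S] at hw
    exact hw

theorem nd_subset {B S S' : Set X} (h : NowhereDenseIn S B) (h1 : S' ⊆ S) (h2 : S' ⊆ B) :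
    NowhereDenseIn S' B := by
  refine ⟨h2, ?_⟩
  have hsub : {x : ↥B | (x : X) ∈ S'} ⊆ {x : ↥B | (x : X) ∈ S} := fun x hx => h1 hx
  have hmono := interior_mono (closure_mono hsub)
  rw [h.2] at hmono
  exact Set.subset_empty_iff.mp hmono

theorem meager_nat {B M : Set X} (G : ℕ → Set X) (hnd : ∀ n, NowhereDenseIn (G n) B)
    (hU : M ∩ B = ⋃ n, G n) : MeagerIn M B := by
  refine ⟨fun i => G (o2n i.2), fun i => hnd _, ?_⟩
  rw [hU]
  ext y
  simp only [Set.mem_iUnion]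
  constructor
  · rintro ⟨n, hn⟩
    exact ⟨⟨((n : ℕ) : Ordinal), nat_lt_omega0 n⟩, by rwa [o2n_cast]⟩
  · rintro ⟨i, hi⟩
    exact ⟨o2n i.2, hi⟩

theorem meager_to_nat {B M : Set X} (h : MeagerIn M B) :
    ∃ G : ℕ → Set X, (∀ n, NowhereDenseIn (G n) B) ∧ M ∩ B = ⋃ n, G n := by
  obtain ⟨F, hF, hU⟩ := h
  refine ⟨fun n => F ⟨((n : ℕ) : Ordinal), nat_lt_omega0 n⟩, fun n => hF _, ?_⟩
  rw [hU]
  ext y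
  simp only [Set.mem_iUnion]
  constructor
  · rintro ⟨i, hi⟩
    refine ⟨o2n i.2, ?_⟩
    have hidx : (⟨((o2n i.2 : ℕ) : Ordinal), nat_lt_omega0 _⟩ :
        {β : Ordinal // β < ω₀}) = i := Subtype.ext (o2n_spec i.2)
    rw [hidx]
    exact hi
  · rintro ⟨n, hn⟩
    exact ⟨_, hn⟩

theorem snoc_cond {s : Q} {β : Ordinal} (hβ : β < ω₀) :
    s.len + 1 < ω₀ ⊔ 1 ∧ β < ω₀ :=
  ⟨lt_sup_of_lt (add_one_lt_omega (len_lt s)), hβ⟩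

theorem snoc_len {s : Q} {β : Ordinal} (hβ : β < ω₀) : (s.snoc β).len = s.len + 1 := by
  simp only [SeqLT.snoc, dif_pos (snoc_cond hβ)]

theorem snoc_val_last {s : Q} {β : Ordinal} (hβ : β < ω₀) : (s.snoc β).val s.len = β := by
  simp only [SeqLT.snoc, dif_pos (snoc_cond hβ)]
  simp

theorem snoc_val_lt {s : Q} {β γ : Ordinal} (hβ : β < ω₀) (hγ : γ < s.len) :
    (s.snoc β).val γ = s.val γ := by
  simp only [SeqLT.snoc, dif_pos (snoc_cond hβ)]
  exact if_neg hγ.ne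

theorem snoc_le {s : Q} {β : Ordinal} (hβ : β < ω₀) : s.le (s.snoc β) :=
  ⟨by rw [snoc_len hβ]; exact le_self_add,
    fun γ hγ => (snoc_val_lt hβ hγ).symm⟩

theorem snoc_slt {s : Q} {β : Ordinal} (hβ : β < ω₀) : s.slt (s.snoc β) :=
  ⟨snoc_le hβ, by
    rw [snoc_len hβ, Ordinal.add_one_eq_succ]; exact Order.lt_succ _⟩

theorem empty_le (s : Q) : (SeqLT.empty ω₀ ω₀).le s :=
  ⟨zero_le, fun β hβ => ((not_lt_of_ge zero_le) hβ).elim⟩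

theorem basicOpen_empty : basicOpen (SeqLT.empty ω₀ ω₀) = Set.univ := by
  ext x
  constructor
  · intro _; trivial
  · intro _ β hβ
    exact ((not_lt_of_ge zero_le) hβ).elim

theorem res_zero (x : X) : x.res 0 = SeqLT.empty ω₀ ω₀ := by
  refine seq_ext ?_ ?_
  · rw [res_len omega0_pos]; rfl
  · intro β hβ
    rw [res_len omega0_pos] at hβ
    exact ((not_lt_of_ge zero_le) hβ).elim

theorem res_succ (x : X) (n : ℕ) :
    x.res (((n : ℕ) : Ordinal) + 1) = (x.res ((n : ℕ) : Ordinal)).snoc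
      (x.val ((n : ℕ) : Ordinal)) := by
  have hn : ((n : ℕ) : Ordinal) < ω₀ := nat_lt_omega0 n
  have hn1 : ((n : ℕ) : Ordinal) + 1 < ω₀ := add_one_lt_omega hn
  have hv : x.val ((n : ℕ) : Ordinal) < ω₀ := x.val_lt _ hn
  refine seq_ext ?_ ?_
  · rw [res_len hn1, snoc_len hv, res_len hn]
  · intro β hβ
    rw [res_len hn1] at hβ
    rw [res_val hn1 hβ]
    rw [Ordinal.add_one_eq_succ] at hβ
    rcases lt_or_eq_of_le (Order.lt_succ_iff.mp hβ) with hβ' | rfl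
    · rw [snoc_val_lt hv (by rw [res_len hn]; exact hβ'), res_val hn hβ']
    · have h2 := snoc_val_last (s := x.res ((n : ℕ) : Ordinal)) hv
      rw [res_len hn] at h2
      rw [h2]

theorem cont_trivial (f : Q → Q) : IsContinuousMap f := by
  intro γ hγ hlt
  exact absurd hlt (not_lt.mpr (omega0_le_of_isSuccLimit hγ))

noncomputable def ofList (l : List ℕ) : Q where
  len := ((l.length : ℕ) : Ordinal)
  len_lt := lt_sup_of_lt (nat_lt_omega0 _)
  val := fun β => if h : β < ω₀ then ((l.getD (o2n h) 0 : ℕ) : Ordinal) else 0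
  val_lt := fun β hβ => by
    have h : β < ω₀ := hβ.trans (nat_lt_omega0 _)
    simp only [dif_pos h]
    exact nat_lt_omega0 _
  val_zero := fun β hβ => by
    by_cases h : β < ω₀
    · simp only [dif_pos h]
      rw [List.getD_eq_default]
      · exact Nat.cast_zero
      · exact Nat.cast_le.mp (by rw [o2n_spec h]; exact hβ)
    · exact dif_neg h

theorem ofList_surj (s : Q) : ∃ l : List ℕ, ofList l = s := by
  have hl := len_lt s
  have hm : ((o2n hl : ℕ) : Ordinal) = s.len := o2n_spec hl
  have hfn : ∀ i : Fin (o2n hl), ((i : ℕ) : Ordinal) < s.len :=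
    fun i => lt_of_lt_of_eq (Nat.cast_lt.mpr i.2) hm
  refine ⟨List.ofFn (fun i : Fin (o2n hl) => o2n (s.val_lt _ (hfn i))), seq_ext ?_ ?_⟩
  · show (((List.ofFn fun i : Fin (o2n hl) => o2n (s.val_lt _ (hfn i))).length : ℕ) :
      Ordinal) = s.len
    rw [List.length_ofFn]
    exact hm
  · intro β hβ
    have hβlen : β < s.len := by
      refine lt_of_lt_of_eq hβ ?_
      show (((List.ofFn fun i : Fin (o2n hl) => o2n (s.val_lt _ (hfn i))).length : ℕ) :
        Ordinal) = s.len
      rw [List.length_ofFn]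
      exact hm
    have hβω : β < ω₀ := hβlen.trans hl
    refine (dif_pos hβω).trans ?_
    have hk : o2n hβω < o2n hl := by
      refine (Nat.cast_lt (α := Ordinal)).mp ?_
      rw [o2n_spec hβω, hm]
      exact hβlen
    rw [List.getD_eq_getElem _ _ (by rw [List.length_ofFn]; exact hk), List.getElem_ofFn]
    simp only [Fin.val_mk]
    rw [o2n_spec, o2n_spec hβω]

noncomputable def enum (n : ℕ) : Q := ofList (Denumerable.ofNat (List ℕ) n)

theorem enum_surj (s : Q) : ∃ n : ℕ, enum n = s := by
  obtain ⟨l, hl⟩ := ofList_surj s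
  exact ⟨Encodable.encode l, by rw [enum, Denumerable.ofNat_encode]; exact hl⟩

noncomputable def nlen (s : Q) : ℕ := o2n (len_lt s)

theorem nlen_spec (s : Q) : ((nlen s : ℕ) : Ordinal) = s.len := o2n_spec _

theorem nlen_eq {s : Q} {n : ℕ} (h : s.len = ((n : ℕ) : Ordinal)) : nlen s = n :=
  Nat.cast_inj.mp (by rw [nlen_spec, h])

/-! ### Forward direction -/

def Bad (f : Q → Q) (s : Q) : Set X :=
  {y | (f s).prefixOf y ∧ ∀ β, β < ω₀ → ¬(f (s.snoc β)).prefixOf y}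

theorem bad_nd {f : Q → Q} (hd : IsDenseMap f) (s : Q) {B : Set X} (hB : IsOpen B) :
    NowhereDenseIn (Bad f s ∩ B) B := by
  rw [nd_char hB Set.inter_subset_right]
  intro r hr
  by_cases hcomp : (f s).le r ∨ r.le (f s)
  · have hex : ∃ t0 : Q, (f s).le t0 ∧ r.le t0 := by
      rcases hcomp with h | h
      · exact ⟨r, h, SeqLT.le_refl r⟩
      · exact ⟨f s, SeqLT.le_refl _, h⟩
    obtain ⟨t0, h1, h2⟩ := hex
    obtain ⟨β, hβ, hle⟩ := hd s t0 h1
    refine ⟨f (s.snoc β), SeqLT.le_trans h2 hle, ?_⟩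
    apply Set.eq_empty_iff_forall_notMem.mpr
    rintro y ⟨hy1, ⟨-, hbadcl⟩, -⟩
    exact hbadcl β hβ hy1
  · refine ⟨r, SeqLT.le_refl r, ?_⟩
    apply Set.eq_empty_iff_forall_notMem.mpr
    rintro y ⟨hy1, ⟨hypre, -⟩, -⟩
    push_neg at hcomp
    rcases compat hy1 (show y ∈ basicOpen (f s) from hypre) with h | h
    · exact hcomp.2 h
    · exact hcomp.1 h

theorem fwd {A' : Set X} {f : Q → Q} (hf : IsHom f) (hd : IsDenseMap f)
    (hA : ∀ x y, FStarVal f x y → y ∈ A') :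
    ComeagerIn A' (basicOpen (f (SeqLT.empty ω₀ ω₀))) := by
  show MeagerIn (basicOpen (f (SeqLT.empty ω₀ ω₀)) \ A') (basicOpen (f (SeqLT.empty ω₀ ω₀)))
  set B := basicOpen (f (SeqLT.empty ω₀ ω₀)) with hBdef
  apply meager_nat (fun n => (Bad f (enum n) ∩ B) ∩ (B \ A'))
  · intro n
    exact nd_subset (bad_nd hd (enum n) (basicOpen_isOpen _)) Set.inter_subset_left
      (fun x hx => hx.1.2)
  · apply Set.Subset.antisymm
    · rintro y ⟨⟨hyB, hyA⟩, -⟩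
      rcases Classical.em (∃ n, y ∈ Bad f (enum n)) with ⟨n, hn⟩ | hnone
      · exact Set.mem_iUnion.mpr ⟨n, ⟨hn, hyB⟩, hyB, hyA⟩
      · exfalso
        push_neg at hnone
        have hbad : ∀ s : Q, (f s).prefixOf y → ∃ β, β < ω₀ ∧ (f (s.snoc β)).prefixOf y := by
          intro s hs
          by_contra hcon
          push_neg at hcon
          obtain ⟨n, hn⟩ := enum_surj s
          exact hnone n (by rw [hn]; exact ⟨hs, fun β hβ h => hcon β hβ h⟩)
        choose nβ hβ1 hβ2 using hbad
        have h0 : (f (SeqLT.empty ω₀ ω₀)).prefixOf y := hyB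
        let step : {q : Q // (f q).prefixOf y} → {q : Q // (f q).prefixOf y} :=
          fun p => ⟨p.1.snoc (nβ p.1 p.2), hβ2 p.1 p.2⟩
        let ch : ℕ → {q : Q // (f q).prefixOf y} :=
          fun n => step^[n] ⟨SeqLT.empty ω₀ ω₀, h0⟩
        have chsucc : ∀ n, ch (n + 1) = step (ch n) := fun n =>
          Function.iterate_succ_apply' step n _
        have chlen : ∀ n : ℕ, (ch n).1.len = ((n : ℕ) : Ordinal) := by
          intro n
          induction n with
          | zero => rfl
          | succ n ih =>
            rw [chsucc]
            show ((ch n).1.snoc _).len = _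
            rw [snoc_len (hβ1 _ _), ih, Nat.cast_succ]
        have chlt : ∀ n : ℕ, (ch n).1.slt (ch (n + 1)).1 := by
          intro n
          rw [chsucc]
          exact snoc_slt (hβ1 _ _)
        have chle : ∀ m n : ℕ, m ≤ n → (ch m).1.le (ch n).1 := by
          intro m n h
          induction n with
          | zero =>
            cases Nat.le_zero.mp h
            exact SeqLT.le_refl _
          | succ n ih =>
            rcases eq_or_lt_of_le h with rfl | h'
            · exact SeqLT.le_refl _
            · exact SeqLT.le_trans (ih (Nat.lt_succ_iff.mp h')) (chlt n).1
        let x : X :=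
          { val := fun β => if h : β < ω₀ then (ch (o2n h + 1)).1.val β else 0
            val_lt := by
              intro β hβ
              simp only [dif_pos hβ]
              apply (ch (o2n hβ + 1)).1.val_lt
              rw [chlen, Nat.cast_succ, o2n_spec hβ, Ordinal.add_one_eq_succ]
              exact Order.lt_succ β
            val_zero := fun β hβ => dif_neg (not_lt.mpr hβ) }
        have xres : ∀ n : ℕ, x.res ((n : ℕ) : Ordinal) = (ch n).1 := by
          intro n
          refine seq_ext ?_ ?_
          · rw [res_len (nat_lt_omega0 n), chlen]
          · intro β hβ
            rw [res_len (nat_lt_omega0 n)] at hβ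
            rw [res_val (nat_lt_omega0 n) hβ]
            have hβω : β < ω₀ := hβ.trans (nat_lt_omega0 n)
            show (if h : β < ω₀ then (ch (o2n h + 1)).1.val β else 0) = _
            rw [dif_pos hβω]
            have hk : ((o2n hβω : ℕ) : Ordinal) = β := o2n_spec hβω
            have hkn : o2n hβω + 1 ≤ n := by
              have : (o2n hβω : ℕ) < n := Nat.cast_lt.mp (by rw [hk]; exact hβ)
              omega
            refine (chle _ n hkn).2 β ?_
            rw [chlen, Nat.cast_succ, hk, Ordinal.add_one_eq_succ]
            exact Order.lt_succ β
        have hfs : FStarVal f x y := by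
          constructor
          · intro α hα
            obtain ⟨n, rfl⟩ := lt_omega0.mp hα
            rw [xres n]
            exact (ch n).2
          · intro β hβ
            obtain ⟨n, rfl⟩ := lt_omega0.mp hβ
            refine ⟨(((n + 1 : ℕ) : ℕ) : Ordinal), nat_lt_omega0 _, ?_⟩
            rw [xres (n + 1)]
            have key : ∀ m : ℕ, ((m : ℕ) : Ordinal) ≤ (f (ch m).1).len := by
              intro m
              induction m with
              | zero =>
                rw [Nat.cast_zero]
                exact zero_le
              | succ m ih =>
                have hlt : (f (ch m).1).len < (f (ch (m + 1)).1).len := (hf _ _ (chlt m)).2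
                rw [Nat.cast_succ, Ordinal.add_one_eq_succ]
                exact Order.succ_le_of_lt (lt_of_le_of_lt ih hlt)
            refine lt_of_lt_of_le ?_ (key (n + 1))
            rw [Nat.cast_succ, Ordinal.add_one_eq_succ]
            exact Order.lt_succ _
        exact hyA (hA x y hfs)
    · intro y hy
      obtain ⟨n, hn⟩ := Set.mem_iUnion.mp hy
      exact ⟨hn.2, hn.2.1⟩

/-! ### Backward direction -/

open Classical

noncomputable def nxt (E : ℕ → Q → Q) (q : Q) (n : ℕ) (β : Ordinal) : Q :=
  if h : β < ω₀ then
    (E n (if q.le (enum (o2n h)) then enum (o2n h) else q)).snoc 0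
  else q.snoc 0

noncomputable def auxF (E : ℕ → Q → Q) (t : Q) : ℕ → (ℕ → Ordinal) → Q
  | 0, _ => t
  | n + 1, g => nxt E (auxF E t n g) n (g n)

noncomputable def FF (E : ℕ → Q → Q) (t : Q) (s : Q) : Q :=
  auxF E t (nlen s) (fun k => s.val ((k : ℕ) : Ordinal))

theorem nxt_slt {E : ℕ → Q → Q} (hE1 : ∀ (n : ℕ) (r : Q), r.le (E n r)) (q : Q) (n : ℕ)
    (β : Ordinal) : q.slt (nxt E q n β) := by
  rw [nxt]
  split
  · next h =>
    have hq1 : q.le (if q.le (enum (o2n h)) then enum (o2n h) else q) := by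
      by_cases hc : q.le (enum (o2n h))
      · rw [if_pos hc]; exact hc
      · rw [if_neg hc]; exact SeqLT.le_refl q
    have h3 : q.le (E n (if q.le (enum (o2n h)) then enum (o2n h) else q)) :=
      SeqLT.le_trans hq1 (hE1 n _)
    exact ⟨SeqLT.le_trans h3 (snoc_le omega0_pos),
      lt_of_le_of_lt h3.1 (snoc_slt omega0_pos).2⟩
  · exact snoc_slt omega0_pos

theorem nxt_t {E : ℕ → Q → Q} {t : Q} (hE2 : ∀ (n : ℕ) (r : Q), t.le r → t.le (E n r)) {q : Q}
    (hq : t.le q) (n : ℕ) (β : Ordinal) : t.le (nxt E q n β) := by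
  rw [nxt]
  split
  · next h =>
    refine SeqLT.le_trans (hE2 n _ ?_) (snoc_le omega0_pos)
    by_cases hc : q.le (enum (o2n h))
    · rw [if_pos hc]; exact SeqLT.le_trans hq hc
    · rw [if_neg hc]; exact hq
  · exact SeqLT.le_trans hq (snoc_le omega0_pos)

theorem auxF_congr (E : ℕ → Q → Q) (t : Q) :
    ∀ (n : ℕ) (g g' : ℕ → Ordinal), (∀ k, k < n → g k = g' k) →
      auxF E t n g = auxF E t n g'
  | 0, _, _, _ => rfl
  | n + 1, g, g', h => by
    show nxt E (auxF E t n g) n (g n) = nxt E (auxF E t n g') n (g' n)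
    rw [auxF_congr E t n g g' (fun k hk => h k (Nat.lt_succ_of_lt hk)),
      h n (Nat.lt_succ_self n)]

theorem auxF_t {E : ℕ → Q → Q} {t : Q} (hE2 : ∀ (n : ℕ) (r : Q), t.le r → t.le (E n r)) :
    ∀ (n : ℕ) (g : ℕ → Ordinal), t.le (auxF E t n g)
  | 0, _ => SeqLT.le_refl t
  | n + 1, g => nxt_t hE2 (auxF_t hE2 n g) n (g n)

theorem auxF_mono {E : ℕ → Q → Q} {t : Q} (hE1 : ∀ (n : ℕ) (r : Q), r.le (E n r))
    (g : ℕ → Ordinal) :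
    ∀ {m n : ℕ}, m < n → (auxF E t m g).slt (auxF E t n g) := by
  intro m n h
  induction n with
  | zero => omega
  | succ n ih =>
    have hstep : (auxF E t n g).slt (auxF E t (n + 1) g) := nxt_slt hE1 _ n (g n)
    rcases Nat.lt_succ_iff_lt_or_eq.mp h with h' | rfl
    · exact ⟨SeqLT.le_trans (ih h').1 hstep.1, lt_trans (ih h').2 hstep.2⟩
    · exact hstep

theorem FF_hom {E : ℕ → Q → Q} {t : Q} (hE1 : ∀ (n : ℕ) (r : Q), r.le (E n r)) : IsHom (FF E t) := by
  intro s s' hss'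
  have hm : nlen s < nlen s' :=
    Nat.cast_lt.mp (by rw [nlen_spec, nlen_spec]; exact hss'.2)
  have hcongr : auxF E t (nlen s) (fun k => s.val ((k : ℕ) : Ordinal)) =
      auxF E t (nlen s) (fun k => s'.val ((k : ℕ) : Ordinal)) := by
    apply auxF_congr
    intro k hk
    refine hss'.1.2 _ ?_
    rw [← nlen_spec s]
    exact_mod_cast hk
  show (FF E t s).slt (FF E t s')
  rw [FF, FF, hcongr]
  exact auxF_mono hE1 _ hm

theorem FF_snoc (E : ℕ → Q → Q) (t : Q) {s : Q} {β : Ordinal} (hβ : β < ω₀) :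
    FF E t (s.snoc β) = nxt E (FF E t s) (nlen s) β := by
  have hlen : (s.snoc β).len = (((nlen s + 1 : ℕ) : ℕ) : Ordinal) := by
    rw [snoc_len hβ, ← nlen_spec s, Nat.cast_succ]
  rw [FF, nlen_eq hlen]
  show nxt E (auxF E t (nlen s) fun k => (s.snoc β).val ((k : ℕ) : Ordinal)) (nlen s)
      ((s.snoc β).val ((nlen s : ℕ) : Ordinal)) = _
  have h1 : auxF E t (nlen s) (fun k => (s.snoc β).val ((k : ℕ) : Ordinal)) = FF E t s := by
    rw [FF]
    apply auxF_congr
    intro k hk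
    refine snoc_val_lt hβ ?_
    rw [← nlen_spec s]
    exact_mod_cast hk
  have h2 : (s.snoc β).val ((nlen s : ℕ) : Ordinal) = β := by
    rw [nlen_spec]
    exact snoc_val_last hβ
  rw [h1, h2]

theorem FF_empty (E : ℕ → Q → Q) (t : Q) : FF E t (SeqLT.empty ω₀ ω₀) = t := by
  rw [FF, nlen_eq (show (SeqLT.empty ω₀ ω₀).len = (((0 : ℕ) : ℕ) : Ordinal) by
    rw [Nat.cast_zero]; rfl)]
  rfl

theorem FF_dense {E : ℕ → Q → Q} {t : Q} (hE1 : ∀ (n : ℕ) (r : Q), r.le (E n r)) :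
    IsDenseMap (FF E t) := by
  intro s t' ht'
  obtain ⟨m, hm⟩ := enum_surj t'
  refine ⟨((m : ℕ) : Ordinal), nat_lt_omega0 m, ?_⟩
  rw [FF_snoc E t (nat_lt_omega0 m), nxt, dif_pos (nat_lt_omega0 m), o2n_cast m, hm,
    if_pos ht']
  exact SeqLT.le_trans (hE1 _ t') (snoc_le omega0_pos)

theorem nxt_avoid {E : ℕ → Q → Q} {t : Q} {G : ℕ → Set X}
    (hE3 : ∀ (n : ℕ) (r : Q), t.le r → basicOpen (E n r) ∩ G n = ∅)
    {q : Q} (hq : t.le q) (n : ℕ) {β : Ordinal} (hβ : β < ω₀) {y : X}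
    (hy : (nxt E q n β).prefixOf y) : y ∉ G n := by
  intro hyG
  rw [nxt, dif_pos hβ] at hy
  have hq₁ : t.le (if q.le (enum (o2n hβ)) then enum (o2n hβ) else q) := by
    by_cases h : q.le (enum (o2n hβ))
    · rw [if_pos h]; exact SeqLT.le_trans hq h
    · rw [if_neg h]; exact hq
  have hyE : y ∈ basicOpen (E n (if q.le (enum (o2n hβ)) then enum (o2n hβ) else q)) :=
    prefix_mono (snoc_le omega0_pos) hy
  have hmem : y ∈ (∅ : Set X) := by
    rw [← hE3 n _ hq₁]
    exact ⟨hyE, hyG⟩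
  exact hmem

theorem FF_branch {E : ℕ → Q → Q} {t : Q} {G : ℕ → Set X}
    (hE2 : ∀ (n : ℕ) (r : Q), t.le r → t.le (E n r))
    (hE3 : ∀ (n : ℕ) (r : Q), t.le r → basicOpen (E n r) ∩ G n = ∅)
    {x y : X} (hxy : FStarVal (FF E t) x y) : y ∈ basicOpen t ∧ ∀ n, y ∉ G n := by
  obtain ⟨h1, -⟩ := hxy
  constructor
  · have h0 := h1 0 omega0_pos
    rw [res_zero, FF_empty] at h0
    exact h0
  · intro n
    have hn1 := h1 (((n + 1 : ℕ) : ℕ) : Ordinal) (nat_lt_omega0 _)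
    rw [show (((n + 1 : ℕ) : ℕ) : Ordinal) = ((n : ℕ) : Ordinal) + 1 from
      Nat.cast_succ n, res_succ,
      FF_snoc E t (x.val_lt _ (nat_lt_omega0 n)),
      nlen_eq (res_len (nat_lt_omega0 n))] at hn1
    exact nxt_avoid hE3 (auxF_t hE2 _ _) n (x.val_lt _ (nat_lt_omega0 n)) hn1

theorem bwd (t : Q) (G : ℕ → Set X)
    (hG : ∀ (n : ℕ) (r : Q), t.le r → ∃ r', r.le r' ∧ t.le r' ∧ basicOpen r' ∩ G n = ∅) :
    ∃ f : Q → Q, IsHom f ∧ IsDenseMap f ∧ f (SeqLT.empty ω₀ ω₀) = t ∧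
      ∀ x y, FStarVal f x y → y ∈ basicOpen t ∧ ∀ n, y ∉ G n := by
  have hG' : ∀ (n : ℕ) (r : Q), ∃ r', r.le r' ∧
      (t.le r → t.le r' ∧ basicOpen r' ∩ G n = ∅) := by
    intro n r
    by_cases h : t.le r
    · obtain ⟨r', h1, h2, h3⟩ := hG n r h
      exact ⟨r', h1, fun _ => ⟨h2, h3⟩⟩
    · exact ⟨r, SeqLT.le_refl r, fun h' => absurd h' h⟩
  choose E hE1 hE23 using hG'
  have hE2 : ∀ (n : ℕ) (r : Q), t.le r → t.le (E n r) := fun n r h => (hE23 n r h).1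
  have hE3 : ∀ (n : ℕ) (r : Q), t.le r → basicOpen (E n r) ∩ G n = ∅ := fun n r h => (hE23 n r h).2
  exact ⟨FF E t, FF_hom hE1, FF_dense hE1, FF_empty E t,
    fun x y hxy => FF_branch hE2 hE3 hxy⟩

/-! ### Main equivalence -/

theorem main (A : Set X) :
    AlmostBaire A ↔
      ((∃ t : Q, ComeagerIn A (basicOpen t)) ∨ ComeagerIn Aᶜ Set.univ) := by
  constructor
  · rintro ⟨f, hf, hd, h | ⟨h, -, he⟩⟩
    · exact Or.inl ⟨f (SeqLT.empty ω₀ ω₀), fwd hf hd h⟩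
    · right
      have hcm := fwd (A' := Aᶜ) hf hd (fun x y hxy => h x y hxy)
      rwa [he, basicOpen_empty] at hcm
  · rintro (⟨t, hc⟩ | hc)
    · obtain ⟨G, hGnd, hGU⟩ := meager_to_nat hc
      have hG : ∀ (n : ℕ) (r : Q), t.le r →
          ∃ r', r.le r' ∧ t.le r' ∧ basicOpen r' ∩ G n = ∅ := by
        intro n r hr
        obtain ⟨r', h1, h2⟩ :=
          (nd_char (basicOpen_isOpen t) (hGnd n).1).mp (hGnd n) r (basicOpen_mono hr)
        exact ⟨r', h1, SeqLT.le_trans hr h1, h2⟩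
      obtain ⟨f, hfh, hfd, -, hbr⟩ := bwd t G hG
      refine ⟨f, hfh, hfd, Or.inl ?_⟩
      intro x y hxy
      obtain ⟨hyt, hyG⟩ := hbr x y hxy
      by_contra hyA
      have hmem : y ∈ (basicOpen t \ A) ∩ basicOpen t := ⟨⟨hyt, hyA⟩, hyt⟩
      rw [hGU] at hmem
      obtain ⟨n, hn⟩ := Set.mem_iUnion.mp hmem
      exact hyG n hn
    · obtain ⟨G, hGnd, hGU⟩ := meager_to_nat hc
      have hG : ∀ (n : ℕ) (r : Q), (SeqLT.empty ω₀ ω₀).le r →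
          ∃ r', r.le r' ∧ (SeqLT.empty ω₀ ω₀).le r' ∧ basicOpen r' ∩ G n = ∅ := by
        intro n r _
        obtain ⟨r', h1, h2⟩ :=
          (nd_char isOpen_univ (hGnd n).1).mp (hGnd n) r (Set.subset_univ _)
        exact ⟨r', h1, empty_le r', h2⟩
      obtain ⟨f, hfh, hfd, hfe, hbr⟩ := bwd _ G hG
      refine ⟨f, hfh, hfd, Or.inr ⟨?_, cont_trivial f, hfe⟩⟩
      intro x y hxy hyA
      obtain ⟨-, hyG⟩ := hbr x y hxy
      have hmem : y ∈ (Set.univ \ Aᶜ) ∩ Set.univ := ⟨⟨trivial, not_not_intro hyA⟩, trivial⟩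
      rw [hGU] at hmem
      obtain ⟨n, hn⟩ := Set.mem_iUnion.mp hmem
      exact hyG n hn

end Statement9Aux

/-- A subset `A` of the Baire space `ω^ω` is almost Baire iff either `A` is comeager in
some basic open set `N_t`, or the complement of `A` is comeager. -/
theorem statement9 (A : Set (SeqFull Cardinal.aleph0.ord Cardinal.aleph0.ord)) :
    AlmostBaire A ↔
      ((∃ t : SeqLT Cardinal.aleph0.ord Cardinal.aleph0.ord, ComeagerIn A (basicOpen t)) ∨
        ComeagerIn Aᶜ Set.univ) := by
  revert A
  rw [Cardinal.ord_aleph0]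
  exact fun A => Statement9Aux.main A

end
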